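/- Let p ≥ 3 be prime, θ, α ∈ ℚ_p with |θ − 1|_p ≤ 1/p, |α|_p = 1, |1 − α|_p ≤ 1/p, and let λ be a weight with λ(0) = 1, λ(1) = α, |λ(i)|_p < 1 for i ≥ 2, |λ(i)|_p → 0, δ := max_{i≥2}|λ(i)|_p > 0. Then for all x, y ∈ B_δ one has ‖F⁺(x) − F⁺(y)‖ ≤ δ·|θ − 1|_p·‖x − y‖; in particular F⁺ is a strict contraction on B_δ when θ ≠ 1. -/

import Mathlib

open Filter

/-- Under the conditions `|θ-1|_p ≤ 1/p`, `|α|_p = 1`,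
`|1-α|_p ≤ 1/p`, and with a weight `λ` satisfying `λ(0) = 1`, `λ(1) = α`,
`|λ(i)|_p < 1` for `i ≥ 2`, `|λ(i)|_p → 0`, `δ = max_{i≥2}|λ(i)|_p > 0`,
one has `‖F⁺(x) - F⁺(y)‖ ≤ δ·|θ-1|_p·‖x - y‖` for all `x, y ∈ B_δ`
(sup-norm on sequences indexed by `i ≥ 2`), i.e. `F⁺` is a strict
contraction on `B_δ` when `θ ≠ 1`. -/
theorem potts_Fplus_contraction (p : ℕ) [Fact p.Prime] (hp : 3 ≤ p)
    (θ α : ℚ_[p]) (hθ : ‖θ - 1‖ ≤ 1 / (p : ℝ)) (hα : ‖α‖ = 1)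
    (hα1 : ‖1 - α‖ ≤ 1 / (p : ℝ))
    (L : ℕ → ℚ_[p]) (hL0 : L 0 = 1) (hL1 : L 1 = α)
    (hLlt : ∀ i, 2 ≤ i → ‖L i‖ < 1)
    (hLten : Tendsto (fun i => ‖L i‖) atTop (nhds 0))
    (δ : ℝ) (hδpos : 0 < δ)
    (hδub : ∀ i, 2 ≤ i → ‖L i‖ ≤ δ) (hδmax : ∃ i, 2 ≤ i ∧ ‖L i‖ = δ)
    (x y : ℕ → ℚ_[p])
    (hxten : Tendsto (fun i => ‖x i‖) atTop (nhds 0))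
    (hyten : Tendsto (fun i => ‖y i‖) atTop (nhds 0))
    (hxB : ∀ i, 2 ≤ i → ‖x i‖ ≤ δ) (hyB : ∀ i, 2 ≤ i → ‖y i‖ ≤ δ)
    (X Y : ℚ_[p]) (hX : X = ∑' j : ℕ, x (j + 2)) (hY : Y = ∑' j : ℕ, y (j + 2))
    (sX sY : ℚ_[p])
    (hsX : sX ^ 2 = (X + θ * (1 - α)) ^ 2 + 4 * α * (X + 1)) (hsX2 : ‖sX - 2‖ < 1)
    (hsY : sY ^ 2 = (Y + θ * (1 - α)) ^ 2 + 4 * α * (Y + 1)) (hsY2 : ‖sY - 2‖ < 1) :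
    ∀ i, 2 ≤ i →
      ‖L i * ((2 * (θ - 1) * x i + (α - 1) * θ + X + sX + 2) /
            ((α + 1) * θ + X + sX)) -
        L i * ((2 * (θ - 1) * y i + (α - 1) * θ + Y + sY + 2) /
            ((α + 1) * θ + Y + sY))‖
        ≤ δ * ‖θ - 1‖ * ⨆ j : ℕ, ‖x (j + 2) - y (j + 2)‖ := by
  intro i hi
  have hpp : p.Prime := Fact.out
  -- basic numeric facts
  have hplt : (1 : ℝ) / p < 1 := by
    rw [div_lt_one (by positivity)]
    exact_mod_cast lt_of_lt_of_le (by norm_num) hp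
  have hδ1 : δ < 1 := by obtain ⟨j, hj, he⟩ := hδmax; exact he ▸ hLlt j hj
  have hθ1 : ‖θ - 1‖ < 1 := lt_of_le_of_lt hθ hplt
  have hα1' : ‖1 - α‖ < 1 := lt_of_le_of_lt hα1 hplt
  -- nonarchimedean helpers
  have nadd : ∀ a b : ℚ_[p], ‖a‖ < 1 → ‖b‖ < 1 → ‖a + b‖ < 1 := fun a b ha hb =>
    lt_of_le_of_lt (Padic.nonarchimedean a b) (max_lt ha hb)
  have hsub : ∀ a b : ℚ_[p], ‖a - b‖ ≤ max ‖a‖ ‖b‖ := fun a b => by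
    simpa [sub_eq_add_neg] using Padic.nonarchimedean a (-b)
  have h4 : ‖(4 : ℚ_[p])‖ = 1 := by
    have h1 : ‖((4 : ℤ) : ℚ_[p])‖ ≤ 1 := Padic.norm_int_le_one _
    have h2 : ¬ ‖((4 : ℤ) : ℚ_[p])‖ < 1 := by
      rw [Padic.norm_intCast_lt_one_iff]
      intro hdvd
      have h4' : p ∣ 4 := by exact_mod_cast hdvd
      have h22 : p ∣ 2 ^ 2 := by norm_num; exact h4'
      have := Nat.le_of_dvd (by norm_num) (hpp.dvd_of_dvd_pow h22)
      omega
    push_cast at h1 h2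
    linarith [lt_or_eq_of_le h1]
  have key : ∀ a : ℚ_[p], ‖a - 4‖ < 1 → ‖a‖ = 1 := by
    intro a ha
    have e : (4 : ℚ_[p]) + (a - 4) = a := by ring
    rw [← e, Padic.add_eq_max_of_ne (by rw [h4]; exact (lt_of_lt_of_le ha le_rfl).ne'),
      h4]
    exact max_eq_left (le_of_lt (ha.trans_le (le_of_eq rfl)))
  -- the sup-norm of the difference
  set d := ⨆ j : ℕ, ‖x (j + 2) - y (j + 2)‖ with hd
  have hbxyδ : ∀ j : ℕ, ‖x (j + 2) - y (j + 2)‖ ≤ δ := fun j =>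
    (hsub _ _).trans (max_le (hxB _ (by omega)) (hyB _ (by omega)))
  have bdd : BddAbove (Set.range fun j : ℕ => ‖x (j + 2) - y (j + 2)‖) :=
    ⟨δ, by rintro _ ⟨j, rfl⟩; exact hbxyδ j⟩
  have hd_le : ∀ j : ℕ, ‖x (j + 2) - y (j + 2)‖ ≤ d := fun j => le_ciSup bdd j
  have hd0 : 0 ≤ d := (norm_nonneg _).trans (hd_le 0)
  -- summability and tsum bounds
  have hsumm : ∀ z : ℕ → ℚ_[p], Tendsto (fun i => ‖z i‖) atTop (nhds 0) →
      Summable (fun j => z (j + 2)) := by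
    intro z hz
    apply NonarchimedeanAddGroup.summable_of_tendsto_cofinite_zero
    rw [tendsto_zero_iff_norm_tendsto_zero, Nat.cofinite_eq_atTop]
    exact hz.comp (tendsto_add_atTop_nat 2)
  have hxs := hsumm x hxten
  have hys := hsumm y hyten
  have hXY : ‖X - Y‖ ≤ d := by
    have e : X - Y = ∑' j : ℕ, (x (j + 2) - y (j + 2)) := by
      rw [hX, hY, hxs.tsum_sub hys]
    rw [e]
    exact IsUltrametricDist.norm_tsum_le_of_forall_le_of_nonneg hd0 hd_le
  have hXn : ‖X‖ ≤ δ := by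
    rw [hX]
    exact IsUltrametricDist.norm_tsum_le_of_forall_le_of_nonneg hδpos.le
      (fun j => hxB _ (by omega))
  have hYn : ‖Y‖ ≤ δ := by
    rw [hY]
    exact IsUltrametricDist.norm_tsum_le_of_forall_le_of_nonneg hδpos.le
      (fun j => hyB _ (by omega))
  -- norms of denominators
  have hα1le : ‖α + 1‖ ≤ 1 :=
    le_trans (Padic.nonarchimedean α 1) (by simp [hα])
  have hDen : ∀ Z sZ : ℚ_[p], ‖Z‖ ≤ δ → ‖sZ - 2‖ < 1 → ‖(α + 1) * θ + Z + sZ‖ = 1 := by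
    intro Z sZ hZ hsZ
    apply key
    have e : (α + 1) * θ + Z + sZ - 4 =
        (((α + 1) * (θ - 1) + (α - 1)) + Z) + (sZ - 2) := by ring
    rw [e]
    refine nadd _ _ (nadd _ _ (nadd _ _ ?_ ?_) (hZ.trans_lt hδ1)) hsZ
    · rw [norm_mul]
      calc ‖α + 1‖ * ‖θ - 1‖ ≤ 1 * ‖θ - 1‖ :=
            mul_le_mul_of_nonneg_right hα1le (norm_nonneg _)
        _ < 1 := by rwa [one_mul]
    · rw [show α - 1 = -(1 - α) by ring, norm_neg]; exact hα1'
  have hDXn : ‖(α + 1) * θ + X + sX‖ = 1 := hDen X sX hXn hsX2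
  have hDYn : ‖(α + 1) * θ + Y + sY‖ = 1 := hDen Y sY hYn hsY2
  have hDX0 : (α + 1) * θ + X + sX ≠ 0 := fun h => by simp [h] at hDXn
  have hDY0 : (α + 1) * θ + Y + sY ≠ 0 := fun h => by simp [h] at hDYn
  -- bound on ‖sY - sX‖
  have hsum1 : ‖sY + sX‖ = 1 := by
    apply key
    have e : sY + sX - 4 = (sY - 2) + (sX - 2) := by ring
    rw [e]; exact nadd _ _ hsY2 hsX2
  have hθn : ‖θ‖ ≤ 1 := by
    have e : (1 : ℚ_[p]) + (θ - 1) = θ := by ring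
    rw [← e]
    exact le_trans (Padic.nonarchimedean _ _) (max_le (by simp) hθ1.le)
  have h2n : ‖(2 : ℚ_[p])‖ ≤ 1 := by
    have := Padic.norm_int_le_one (p := p) 2
    push_cast at this
    exact this
  have hCn : ‖X + Y + 2 * θ * (1 - α) + 4 * α‖ ≤ 1 := by
    refine le_trans (Padic.nonarchimedean _ _) (max_le
      (le_trans (Padic.nonarchimedean _ _) (max_le
        (le_trans (Padic.nonarchimedean _ _)
          (max_le (hXn.trans hδ1.le) (hYn.trans hδ1.le))) ?_)) ?_)
    · rw [norm_mul, norm_mul]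
      calc ‖(2 : ℚ_[p])‖ * ‖θ‖ * ‖1 - α‖ ≤ 1 * 1 * 1 := by
            refine mul_le_mul (mul_le_mul h2n hθn (norm_nonneg _) zero_le_one)
              hα1'.le (norm_nonneg _) (by norm_num)
        _ = 1 := by norm_num
    · rw [norm_mul, h4, hα, one_mul]
  have hsXY : ‖sY - sX‖ ≤ d := by
    have hfac : (sY - sX) * (sY + sX) = (Y - X) * (X + Y + 2 * θ * (1 - α) + 4 * α) := by
      linear_combination hsY - hsX
    have e : ‖sY - sX‖ = ‖(sY - sX) * (sY + sX)‖ := by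
      rw [norm_mul, hsum1, mul_one]
    rw [e, hfac, norm_mul]
    calc ‖Y - X‖ * ‖X + Y + 2 * θ * (1 - α) + 4 * α‖ ≤ d * 1 := by
          refine mul_le_mul ?_ hCn (norm_nonneg _) hd0
          rw [norm_sub_rev]; exact hXY
      _ = d := mul_one d
  -- main algebraic identity
  obtain ⟨j, rfl⟩ : ∃ j : ℕ, i = j + 2 := ⟨i - 2, by omega⟩
  have heq : L (j + 2) * ((2 * (θ - 1) * x (j + 2) + (α - 1) * θ + X + sX + 2) /
        ((α + 1) * θ + X + sX)) -
      L (j + 2) * ((2 * (θ - 1) * y (j + 2) + (α - 1) * θ + Y + sY + 2) /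
        ((α + 1) * θ + Y + sY)) =
      L (j + 2) * (2 * (θ - 1)) *
        ((x (j + 2) - y (j + 2)) * ((α + 1) * θ + Y + sY) +
          (y (j + 2) - 1) * ((Y - X) + (sY - sX))) /
        (((α + 1) * θ + X + sX) * ((α + 1) * θ + Y + sY)) := by
    have hX0 : (α + 1) * θ + X + sX ≠ 0 := by
      intro h0; rw [h0, norm_zero] at hDXn; exact zero_ne_one hDXn
    have hY0 : (α + 1) * θ + Y + sY ≠ 0 := by
      intro h0; rw [h0, norm_zero] at hDYn; exact zero_ne_one hDYn
    rw [mul_div_assoc, ← mul_sub, div_sub_div _ _ hX0 hY0, mul_assoc, ← mul_div_assoc]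
    congr 2
    ring
  rw [heq, norm_div, norm_mul ((α + 1) * θ + X + sX), hDXn, hDYn, mul_one, div_one,
    norm_mul, norm_mul (L (j + 2))]
  -- bound each factor
  have hT : ‖(x (j + 2) - y (j + 2)) * ((α + 1) * θ + Y + sY) +
      (y (j + 2) - 1) * ((Y - X) + (sY - sX))‖ ≤ d := by
    refine le_trans (Padic.nonarchimedean _ _) (max_le ?_ ?_)
    · rw [norm_mul, hDYn, mul_one]; exact hd_le j
    · rw [norm_mul]
      calc ‖y (j + 2) - 1‖ * ‖(Y - X) + (sY - sX)‖ ≤ 1 * d := by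
            refine mul_le_mul ?_ ?_ (norm_nonneg _) zero_le_one
            · exact (hsub _ _).trans (max_le ((hyB _ (by omega)).trans hδ1.le) (by simp))
            · refine le_trans (Padic.nonarchimedean _ _) (max_le ?_ hsXY)
              rw [norm_sub_rev]; exact hXY
        _ = d := one_mul d
  have h2θ : ‖(2 : ℚ_[p]) * (θ - 1)‖ ≤ ‖θ - 1‖ := by
    rw [norm_mul]
    calc ‖(2 : ℚ_[p])‖ * ‖θ - 1‖ ≤ 1 * ‖θ - 1‖ :=
          mul_le_mul_of_nonneg_right h2n (norm_nonneg _)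
      _ = ‖θ - 1‖ := one_mul _
  exact mul_le_mul (mul_le_mul (hδub _ (by omega)) h2θ (norm_nonneg _) hδpos.le)
    hT (norm_nonneg _) (by positivity)
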